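/- Let I be an irreducible interval of a MinBudget instance (N, ⊴, c). Then every ideal J ⊆ I of ⊴_I satisfies r(J) ≥ r(I). -/

import Mathlib

open List

variable {ι : Type*} [DecidableEq ι]

/-- Total cost of a schedule (list of jobs). -/
def listCost (c : ι → ℝ) (S : List ι) : ℝ := (S.map c).sum

/-- Budget of a schedule: maximum cost of a prefix (the empty prefix has cost 0). -/
def listBudget (c : ι → ℝ) : List ι → ℝ
  | [] => 0
  | j :: t => max 0 (c j + listBudget c t)

/-- Return of a schedule. -/
def listReturn (c : ι → ℝ) (S : List ι) : ℝ := listCost c S - listBudget c S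

/-- `S` enumerates the finite job set `N` without repetition. -/
def IsScheduleOf (N : Finset ι) (S : List ι) : Prop :=
  S.Nodup ∧ ∀ j, j ∈ S ↔ j ∈ N

/-- `S` is a linear extension of the precedence relation `r` (restricted to its jobs). -/
def RespectsOrder (r : ι → ι → Prop) (S : List ι) : Prop :=
  ∀ i j, r i j → i ∈ S → j ∈ S → S.idxOf i ≤ S.idxOf j

/-- Minimum budget over all feasible schedules of the job set `X`. -/
noncomputable def setBudget (r : ι → ι → Prop) (c : ι → ℝ) (X : Finset ι) : ℝ :=
  sInf {b | ∃ S : List ι, IsScheduleOf X S ∧ RespectsOrder r S ∧ listBudget c S = b}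

/-- Total cost of a job set. -/
def setCost (c : ι → ℝ) (X : Finset ι) : ℝ := ∑ j ∈ X, c j

/-- Return of a job set. -/
noncomputable def setReturn (r : ι → ι → Prop) (c : ι → ℝ) (X : Finset ι) : ℝ :=
  setCost c X - setBudget r c X

/-- The cbr-preorder on job sets. -/
def cbrLE (r : ι → ι → Prop) (c : ι → ℝ) (X Y : Finset ι) : Prop :=
  (setCost c X < 0 ∧ 0 ≤ setCost c Y) ∨
  (setCost c X < 0 ∧ setCost c Y < 0 ∧ setBudget r c X < setBudget r c Y) ∨
  (setCost c X < 0 ∧ setCost c Y < 0 ∧ setBudget r c X = setBudget r c Y ∧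
    setReturn r c X ≤ setReturn r c Y) ∨
  (0 ≤ setCost c X ∧ 0 ≤ setCost c Y ∧ setReturn r c X ≤ setReturn r c Y)

/-- `J` is an ideal (downward-closed subset) of `r` restricted to `I`. -/
def IsIdealIn (r : ι → ι → Prop) (I J : Finset ι) : Prop :=
  J ⊆ I ∧ ∀ j ∈ J, ∀ i ∈ I, r i j → i ∈ J

/-- `F` is a filter (upward-closed subset) of `r` restricted to `I`. -/
def IsFilterIn (r : ι → ι → Prop) (I F : Finset ι) : Prop :=
  F ⊆ I ∧ ∀ i ∈ F, ∀ j ∈ I, r i j → j ∈ F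

/-- `I` is an interval of `r` on `N`: intersection of an ideal and a filter. -/
def IsIntervalIn (r : ι → ι → Prop) (N I : Finset ι) : Prop :=
  ∃ J F, IsIdealIn r N J ∧ IsFilterIn r N F ∧ I = J ∩ F

/-- An irreducible interval: every ideal of the restricted order is `⪰` the interval. -/
def IsIrreducibleIn (r : ι → ι → Prop) (c : ι → ℝ) (N I : Finset ι) : Prop :=
  IsIntervalIn r N I ∧ ∀ J, IsIdealIn r I J → cbrLE r c I J

/-- A schedule (given as blocks `SS`) in increasing irreducible structure. -/
def IncIrrStructure (r : ι → ι → Prop) (c : ι → ℝ) (N : Finset ι)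
    (SS : List (List ι)) : Prop :=
  IsScheduleOf N SS.flatten ∧ RespectsOrder r SS.flatten ∧
  (∀ S ∈ SS, IsIrreducibleIn r c N S.toFinset ∧ RespectsOrder r S ∧
    listBudget c S = setBudget r c S.toFinset) ∧
  ∀ i j : Fin SS.length, i < j → cbrLE r c (SS.get i).toFinset (SS.get j).toFinset


section AuxProof

variable {ι : Type*} [DecidableEq ι]

lemma listBudget_nonneg (c : ι → ℝ) : ∀ S : List ι, 0 ≤ listBudget c S
  | [] => le_refl 0
  | _ :: _ => le_max_left _ _

lemma sum_take_le_listBudget (c : ι → ℝ) : ∀ (S : List ι) (n : ℕ),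
    ((S.take n).map c).sum ≤ listBudget c S
  | [], _ => by simp [listBudget]
  | a :: t, 0 => by simpa using listBudget_nonneg c (a :: t)
  | a :: t, n+1 => by
      simp only [List.take_succ_cons, List.map_cons, List.sum_cons, listBudget]
      have := sum_take_le_listBudget c t n
      exact le_max_of_le_right (by linarith)

lemma exists_budget_take (c : ι → ℝ) : ∀ S : List ι,
    ∃ n, listBudget c S = ((S.take n).map c).sum
  | [] => ⟨0, by simp [listBudget]⟩
  | a :: t => by
      obtain ⟨n, hn⟩ := exists_budget_take c t
      rcases le_or_gt (c a + listBudget c t) 0 with h | h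
      · exact ⟨0, by simp [listBudget, max_eq_left h]⟩
      · refine ⟨n+1, ?_⟩
        show max 0 (c a + listBudget c t) = _
        rw [max_eq_right h.le, hn, List.take_succ_cons, List.map_cons, List.sum_cons]

lemma mem_take_of_indexOf_lt {i : ι} : ∀ (S : List ι) (m : ℕ),
    i ∈ S → S.idxOf i < m → i ∈ S.take m := by
  intro S
  induction S with
  | nil => simp
  | cons a t ih =>
    intro m hi hlt
    cases m with
    | zero => omega
    | succ k =>
      by_cases hia : i = a
      · subst hia; simp
      · have hi' : i ∈ t := by simpa [hia] using hi
        have hlt' : t.idxOf i < k := by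
          rw [List.idxOf_cons_ne _ (Ne.symm hia)] at hlt; omega
        rw [List.take_succ_cons]
        exact List.mem_cons_of_mem a (ih k hi' hlt')

lemma indexOf_lt_of_mem_take {i : ι} : ∀ (S : List ι) (m : ℕ),
    i ∈ S.take m → S.idxOf i < m := by
  intro S
  induction S with
  | nil => simp
  | cons a t ih =>
    intro m hi
    cases m with
    | zero => simp at hi
    | succ k =>
      rw [List.take_succ_cons] at hi
      by_cases hia : i = a
      · subst hia; simp [List.idxOf_cons_self]
      · have hi' : i ∈ t.take k := by simpa [hia] using hi
        rw [List.idxOf_cons_ne _ (Ne.symm hia)]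
        exact Nat.succ_lt_succ (ih k hi')

lemma sublist_indexOf_mono {T S : List ι} (hsub : T <+ S) (hS : S.Nodup) :
    ∀ {i j : ι}, i ∈ T → j ∈ T → S.idxOf i ≤ S.idxOf j →
      T.idxOf i ≤ T.idxOf j := by
  induction hsub with
  | slnil => intro i j hi; simp at hi
  | cons a hsub ih =>
    intro i j hi hj hle
    have haS := (List.nodup_cons.mp hS).1
    have hSn := (List.nodup_cons.mp hS).2
    have hia : i ≠ a := fun h => haS (h ▸ hsub.subset hi)
    have hja : j ≠ a := fun h => haS (h ▸ hsub.subset hj)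
    rw [List.idxOf_cons_ne _ (Ne.symm hia), List.idxOf_cons_ne _ (Ne.symm hja)] at hle
    exact ih hSn hi hj (by omega)
  | cons_cons a hsub ih =>
    intro i j hi hj hle
    have hSn := (List.nodup_cons.mp hS).2
    by_cases hia : i = a
    · subst hia; simp [List.idxOf_cons_self]
    · have hja : j ≠ a := by
        intro h; subst h
        rw [List.idxOf_cons_self, List.idxOf_cons_ne _ (Ne.symm hia)] at hle
        omega
      have hi' := (List.mem_cons.mp hi).resolve_left hia
      have hj' := (List.mem_cons.mp hj).resolve_left hja
      rw [List.idxOf_cons_ne _ (Ne.symm hia), List.idxOf_cons_ne _ (Ne.symm hja)] at hle ⊢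
      have := ih hSn hi' hj' (by omega)
      omega

lemma respectsOrder_sublist {r : ι → ι → Prop} {S T : List ι} (hord : RespectsOrder r S)
    (hsub : T <+ S) (hS : S.Nodup) : RespectsOrder r T := by
  intro i j hij hi hj
  exact sublist_indexOf_mono hsub hS hi hj (hord i j hij (hsub.subset hi) (hsub.subset hj))

lemma exists_take_filter (p : ι → Bool) : ∀ (S : List ι) (n : ℕ),
    ∃ m, (S.filter p).take n = (S.take m).filter p := by
  intro S
  induction S with
  | nil => intro n; exact ⟨0, by simp⟩
  | cons a t ih =>
    intro n
    by_cases hpa : p a = true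
    · cases n with
      | zero => exact ⟨0, by simp⟩
      | succ k =>
        obtain ⟨m, hm⟩ := ih k
        exact ⟨m+1, by simp [List.filter_cons, hpa, List.take_succ_cons, hm]⟩
    · obtain ⟨m, hm⟩ := ih n
      refine ⟨m+1, ?_⟩
      simp [List.filter_cons, hpa, List.take_succ_cons, hm]

lemma exists_schedule {r : ι → ι → Prop} (hr : IsPartialOrder ι r) (X : Finset ι) :
    ∃ S : List ι, IsScheduleOf X S ∧ RespectsOrder r S := by
  induction X using Finset.strongInduction with
  | _ X ih =>
    rcases X.eq_empty_or_nonempty with hX | hX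
    · subst hX
      exact ⟨[], ⟨List.nodup_nil, by simp⟩, fun i j _ hi => by simp at hi⟩
    · letI : Preorder ι :=
        { le := r
          le_refl := fun a => hr.toIsPreorder.toRefl.refl a
          le_trans := fun a b d hab hbd => hr.toIsPreorder.toIsTrans.trans a b d hab hbd }
      obtain ⟨m, hmX, hmin⟩ := X.exists_minimal hX
      have hminr : ∀ x ∈ X, r x m → x = m := by
        intro x hx hxm
        have hmx : r m x := by
          by_contra h
          exact h (hmin hx hxm)
        exact hr.toAntisymm.antisymm x m hxm hmx
      obtain ⟨S', hS'sched, hS'ord⟩ := ih (X.erase m) (Finset.erase_ssubset hmX)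
      have hmS' : m ∉ S' := fun h => (Finset.mem_erase.mp ((hS'sched.2 m).mp h)).1 rfl
      refine ⟨m :: S', ⟨List.nodup_cons.mpr ⟨hmS', hS'sched.1⟩, ?_⟩, ?_⟩
      · intro j
        rw [List.mem_cons, hS'sched.2 j, Finset.mem_erase]
        constructor
        · rintro (h | h)
          · exact h ▸ hmX
          · exact h.2
        · intro h
          by_cases hj : j = m
          · exact Or.inl hj
          · exact Or.inr ⟨hj, h⟩
      · intro i j hij hi hj
        by_cases hi' : i = m
        · subst hi'; simp [List.idxOf_cons_self]
        · have hij' : j ≠ m := by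
            intro h; subst h
            have hiS' : i ∈ S' := (List.mem_cons.mp hi).resolve_left hi'
            have hiX : i ∈ X := Finset.mem_of_mem_erase ((hS'sched.2 i).mp hiS')
            exact hi' (hminr i hiX hij)
          have hiS' : i ∈ S' := (List.mem_cons.mp hi).resolve_left hi'
          have hjS' : j ∈ S' := (List.mem_cons.mp hj).resolve_left hij'
          rw [List.idxOf_cons_ne _ (Ne.symm hi'), List.idxOf_cons_ne _ (Ne.symm hij')]
          exact Nat.succ_le_succ (hS'ord i j hij hiS' hjS')

lemma setBudget_le_listBudget {r : ι → ι → Prop} (c : ι → ℝ) {X : Finset ι} {S : List ι}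
    (hS : IsScheduleOf X S) (ho : RespectsOrder r S) :
    setBudget r c X ≤ listBudget c S := by
  apply csInf_le
  · refine ⟨0, ?_⟩
    rintro b ⟨S', _, _, rfl⟩
    exact listBudget_nonneg c S'
  · exact ⟨S, hS, ho, rfl⟩

lemma exists_optimal_schedule {r : ι → ι → Prop} (hr : IsPartialOrder ι r) (c : ι → ℝ)
    (X : Finset ι) :
    ∃ S, IsScheduleOf X S ∧ RespectsOrder r S ∧ listBudget c S = setBudget r c X := by
  have hne : {b | ∃ S : List ι, IsScheduleOf X S ∧ RespectsOrder r S ∧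
      listBudget c S = b}.Nonempty := by
    obtain ⟨S, h1, h2⟩ := exists_schedule hr X
    exact ⟨_, S, h1, h2, rfl⟩
  have hfin : {b | ∃ S : List ι, IsScheduleOf X S ∧ RespectsOrder r S ∧
      listBudget c S = b}.Finite := by
    apply Set.Finite.subset (List.finite_toSet ((X.toList.permutations).map (listBudget c)))
    rintro b ⟨S, hS, _, rfl⟩
    simp only [Set.mem_setOf_eq, List.mem_map]
    refine ⟨S, ?_, rfl⟩
    rw [List.mem_permutations]
    apply List.perm_of_nodup_nodup_toFinset_eq hS.1 X.nodup_toList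
    ext a
    simp [hS.2 a]
  have := hne.csInf_mem hfin
  rw [show sInf {b | ∃ S : List ι, IsScheduleOf X S ∧ RespectsOrder r S ∧
      listBudget c S = b} = setBudget r c X from rfl] at this
  obtain ⟨S, h1, h2, h3⟩ := this
  exact ⟨S, h1, h2, h3⟩

lemma filter_schedule {X J : Finset ι} (hJX : J ⊆ X) {S : List ι} (hS : IsScheduleOf X S) :
    IsScheduleOf J (S.filter (fun x => decide (x ∈ J))) := by
  constructor
  · exact hS.1.filter _
  · intro j
    simp only [List.mem_filter, decide_eq_true_eq, hS.2 j]
    exact ⟨fun h => h.2, fun h => ⟨hJX h, h⟩⟩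

lemma take_ideal {r : ι → ι → Prop} {I : Finset ι} {S : List ι} (hS : IsScheduleOf I S)
    (ho : RespectsOrder r S) (m : ℕ) : IsIdealIn r I (S.take m).toFinset := by
  constructor
  · intro x hx
    rw [List.mem_toFinset] at hx
    exact (hS.2 x).mp ((S.take_sublist m).subset hx)
  · intro j hj i hiI hij
    rw [List.mem_toFinset] at hj ⊢
    have hiS : i ∈ S := (hS.2 i).mpr hiI
    have hjS : j ∈ S := (S.take_sublist m).subset hj
    have h1 := ho i j hij hiS hjS
    exact mem_take_of_indexOf_lt S m hiS (lt_of_le_of_lt h1 (indexOf_lt_of_mem_take S m hj))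

lemma ideal_union {r : ι → ι → Prop} {I A B : Finset ι} (hA : IsIdealIn r I A)
    (hB : IsIdealIn r I B) : IsIdealIn r I (A ∪ B) := by
  constructor
  · exact Finset.union_subset hA.1 hB.1
  · intro j hj i hiI hij
    rcases Finset.mem_union.mp hj with h | h
    · exact Finset.mem_union_left _ (hA.2 j h i hiI hij)
    · exact Finset.mem_union_right _ (hB.2 j h i hiI hij)

/-- Restricting an optimal schedule of `I` to an (arbitrary) subset `J` gives a prefix-ideal
bound on the budget of `J`. -/
lemma budget_filter_bound {r : ι → ι → Prop} (hr : IsPartialOrder ι r) (c : ι → ℝ)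
    {I J : Finset ι} (hJI : J ⊆ I) :
    ∃ P : Finset ι, IsIdealIn r I P ∧ setBudget r c J ≤ setCost c (P ∩ J) ∧
      setCost c P ≤ setBudget r c I := by
  obtain ⟨S, hS, hSo, hSb⟩ := exists_optimal_schedule hr c I
  set T := S.filter (fun x => decide (x ∈ J)) with hT
  have hTs : IsScheduleOf J T := filter_schedule hJI hS
  have hTo : RespectsOrder r T := respectsOrder_sublist hSo (S.filter_sublist) hS.1
  obtain ⟨n, hn⟩ := exists_budget_take c T
  obtain ⟨m, hm⟩ := exists_take_filter (fun x => decide (x ∈ J)) S n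
  have hPnd : (S.take m).Nodup := hS.1.sublist (S.take_sublist m)
  refine ⟨(S.take m).toFinset, take_ideal hS hSo m, ?_, ?_⟩
  · have h1 : setBudget r c J ≤ ((T.take n).map c).sum := hn ▸ setBudget_le_listBudget c hTs hTo
    rw [hm] at h1
    have h2 : (((S.take m).filter (fun x => decide (x ∈ J))).map c).sum
        = setCost c ((S.take m).toFinset ∩ J) := by
      rw [← List.sum_toFinset c (hPnd.filter _), List.toFinset_filter]
      show _ = Finset.sum _ _
      congr 1
      rw [← Finset.filter_mem_eq_inter]
      apply Finset.filter_congr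
      intro x _
      simp
    rwa [h2] at h1
  · have h3 : setCost c (S.take m).toFinset = ((S.take m).map c).sum :=
      List.sum_toFinset c hPnd
    rw [h3, ← hSb]
    exact sum_take_le_listBudget c S m

/-- Every ideal of an irreducible interval of negative cost has cost at least the total cost. -/
lemma irreducible_ideal_cost {r : ι → ι → Prop} (hr : IsPartialOrder ι r) (c : ι → ℝ)
    {N I : Finset ι} (hI : IsIrreducibleIn r c N I) (hc : setCost c I < 0) :
    ∀ M, IsIdealIn r I M → setCost c I ≤ setCost c M := by
  classical
  set s := I.powerset.filter (fun M => IsIdealIn r I M) with hs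
  have hmem : ∀ M, M ∈ s ↔ IsIdealIn r I M := by
    intro M
    rw [hs, Finset.mem_filter, Finset.mem_powerset]
    exact ⟨fun h => h.2, fun h => ⟨h.1, h⟩⟩
  have hne : s.Nonempty := ⟨I, (hmem I).mpr ⟨Finset.Subset.refl I, fun j _ i hi _ => hi⟩⟩
  obtain ⟨M₀, hM₀s, hmin⟩ := s.exists_min_image (setCost c) hne
  have hM₀ := (hmem M₀).mp hM₀s
  suffices h : setCost c I ≤ setCost c M₀ by
    intro M hM
    exact le_trans h (hmin M ((hmem M).mpr hM))
  by_contra hlt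
  push_neg at hlt
  have hcM₀ : setCost c M₀ < 0 := lt_trans hlt hc
  rcases hI.2 M₀ hM₀ with ⟨_, h2⟩ | ⟨_, _, hb⟩ | ⟨_, _, hbeq, hret⟩ | ⟨h1, _⟩
  · linarith
  · obtain ⟨P, hPid, hle1, hle2⟩ := budget_filter_bound hr c hM₀.1
    have hM₁ : IsIdealIn r I (M₀ ∪ P) := ideal_union hM₀ hPid
    have hmin1 := hmin (M₀ ∪ P) ((hmem _).mpr hM₁)
    have hie : setCost c (M₀ ∪ P) + setCost c (M₀ ∩ P) = setCost c M₀ + setCost c P :=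
      Finset.sum_union_inter
    rw [Finset.inter_comm] at hle1
    linarith
  · simp only [setReturn] at hret
    linarith
  · linarith

end AuxProof

theorem irreducible_ideal_return (r : ι → ι → Prop) (hr : IsPartialOrder ι r)
    (c : ι → ℝ) (N I : Finset ι) (hI : IsIrreducibleIn r c N I) :
    ∀ J, IsIdealIn r I J → setReturn r c I ≤ setReturn r c J := by
  intro J hJ
  rcases lt_or_ge (setCost c I) 0 with hc | hc
  · have hcost := irreducible_ideal_cost hr c hI hc
    obtain ⟨P, hPid, hle1, hle2⟩ := budget_filter_bound hr c hJ.1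
    have hPJ : IsIdealIn r I (P ∪ J) := ideal_union hPid hJ
    have h1 := hcost (P ∪ J) hPJ
    have hie : setCost c (P ∪ J) + setCost c (P ∩ J) = setCost c P + setCost c J :=
      Finset.sum_union_inter
    simp only [setReturn]
    linarith
  · rcases hI.2 J hJ with ⟨h1, _⟩ | ⟨h1, _⟩ | ⟨h1, _⟩ | ⟨_, _, hret⟩
    · linarith
    · linarith
    · linarith
    · exact hret
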